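/- Let g be a nonunimodular finite-dimensional real Lie algebra with a cyclic inner product, let u = {X ∈ g : tr(ad_X) = 0} be its unimodular kernel, and let W be a unit vector orthogonal to u. Then the restriction of ad_W to u is self-adjoint with respect to the inner product. -/

import Mathlib

attribute [local instance 100] LieRing.ofAssociativeRing

/-- In a nonunimodular finite-dimensional real Lie algebra with a cyclic inner
product, if `W` is a unit vector orthogonal to the unimodular kernel
`u = {X : tr(ad X) = 0}`, then `ad W` restricted to `u` is self-adjoint. -/
theorem adW_selfadjoint_on_unimodular_kernel {L : Type*} [LieRing L] [LieAlgebra ℝ L]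
    [FiniteDimensional ℝ L]
    (B : L →ₗ[ℝ] L →ₗ[ℝ] ℝ)
    (hsymm : ∀ x y : L, B x y = B y x)
    (hpos : ∀ x : L, x ≠ 0 → 0 < B x x)
    (hcyc : ∀ X Y Z : L, B ⁅X, Y⁆ Z + B ⁅Y, Z⁆ X + B ⁅Z, X⁆ Y = 0)
    (hnu : ∃ X : L, LinearMap.trace ℝ L (LieAlgebra.ad ℝ L X) ≠ 0)
    (W : L) (hW : B W W = 1)
    (hWorth : ∀ X : L, LinearMap.trace ℝ L (LieAlgebra.ad ℝ L X) = 0 → B W X = 0) :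
    ∀ X Y : L, LinearMap.trace ℝ L (LieAlgebra.ad ℝ L X) = 0 →
      LinearMap.trace ℝ L (LieAlgebra.ad ℝ L Y) = 0 →
      B ⁅W, X⁆ Y = B X ⁅W, Y⁆ := by
  intro X Y hX hY
  have htr : LinearMap.trace ℝ L (LieAlgebra.ad ℝ L ⁅X, Y⁆) = 0 := by
    rw [LieHom.map_lie]
    have : (⁅LieAlgebra.ad ℝ L X, LieAlgebra.ad ℝ L Y⁆ : Module.End ℝ L)
        = (LieAlgebra.ad ℝ L X) * (LieAlgebra.ad ℝ L Y)
          - (LieAlgebra.ad ℝ L Y) * (LieAlgebra.ad ℝ L X) := rfl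
    rw [this, map_sub, LinearMap.trace_mul_comm, sub_self]
  have h1 := hcyc W X Y
  have h2 : B ⁅X, Y⁆ W = 0 := by rw [hsymm]; exact hWorth _ htr
  have h3 : B ⁅Y, W⁆ X = - B ⁅W, Y⁆ X := by rw [← lie_skew Y W, map_neg, LinearMap.neg_apply]
  rw [h2, h3] at h1
  have := hsymm ⁅W, Y⁆ X
  linarith
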